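/- The set N = {(W, M) : W is a real k×n matrix, M is a real symmetric positive definite k×k matrix, and there exist a nonzero vector v ∈ ℝ^k and λ > 0 such that Wᵀv = 0 and Mv = λv}, viewed as a subset of the finite-dimensional real vector space of pairs (W, M) with W a k×n matrix and M a symmetric k×k matrix, has Lebesgue measure zero. -/

import Mathlib

open Matrix MeasureTheory
open scoped Matrix

attribute [local instance] Matrix.frobeniusNormedAddCommGroup Matrix.frobeniusNormedSpace

section AuxPoly

lemma continuous_mvpoly_eval {σ : Type*} (p : MvPolynomial σ ℝ) :
    Continuous fun x : σ → ℝ => MvPolynomial.eval x p := by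
  have h : (fun x : σ → ℝ => MvPolynomial.eval x p)
      = fun x => ∑ d ∈ p.support, MvPolynomial.coeff d p * ∏ i ∈ d.support, x i ^ d i := by
    funext x; rw [MvPolynomial.eval_eq]
  rw [h]
  exact continuous_finset_sum _ fun d _ =>
    continuous_const.mul (continuous_finset_prod _ fun i _ => (continuous_apply i).pow _)

lemma mvpoly_zero_set_null : ∀ (m : ℕ) (p : MvPolynomial (Fin m) ℝ), p ≠ 0 →
    volume {x : Fin m → ℝ | MvPolynomial.eval x p = 0} = 0 := by
  intro m
  induction m with
  | zero =>
    intro p hp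
    convert measure_empty
    · ext x
      simp only [Set.mem_setOf_eq, Set.mem_empty_iff_false, iff_false]
      rw [MvPolynomial.eq_C_of_isEmpty p, MvPolynomial.eval_C]
      intro h
      exact hp (by rw [MvPolynomial.eq_C_of_isEmpty p, h, map_zero])
    · infer_instance
  | succ m ih =>
    intro p hp
    set q := MvPolynomial.finSuccEquiv ℝ m p with hqdef
    have hq0 : q ≠ 0 := by
      rw [hqdef]
      exact (map_ne_zero_iff _ (MvPolynomial.finSuccEquiv ℝ m).injective).mpr hp
    have hex : ∃ i, q.coeff i ≠ 0 := by
      by_contra h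
      push_neg at h
      exact hq0 (Polynomial.ext fun i => by simp [h i])
    obtain ⟨i0, hi0⟩ := hex
    have key : ∀ x : Fin (m + 1) → ℝ,
        MvPolynomial.eval x p
          = Polynomial.eval (x 0) (q.map (MvPolynomial.eval fun j => x j.succ)) := by
      intro x
      have h1 := MvPolynomial.eval_eq_eval_mv_eval' (fun j => x j.succ) (x 0) p
      have h2 : (Fin.cons (x 0) (fun j => x j.succ) : Fin (m + 1) → ℝ) = x :=
        Fin.cons_self_tail x
      rw [h2] at h1
      exact h1
    set S' : Set (ℝ × (Fin m → ℝ)) :=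
      {y | Polynomial.eval y.1 (q.map (MvPolynomial.eval y.2)) = 0} with hS'def
    have hcont' : Continuous fun y : ℝ × (Fin m → ℝ) =>
        Polynomial.eval y.1 (q.map (MvPolynomial.eval y.2)) := by
      have h : (fun y : ℝ × (Fin m → ℝ) => Polynomial.eval y.1 (q.map (MvPolynomial.eval y.2)))
          = fun y => MvPolynomial.eval (Fin.cons y.1 y.2) p := by
        funext y
        rw [← MvPolynomial.eval_eq_eval_mv_eval']
      rw [h]
      refine (continuous_mvpoly_eval p).comp (continuous_pi fun i => ?_)
      refine Fin.cases ?_ (fun j => ?_) i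
      · simpa using continuous_fst
      · simpa [Function.comp_def] using (continuous_apply j).comp continuous_snd
    have hS'm : MeasurableSet S' := (isClosed_eq hcont' continuous_const).measurableSet
    have hT := volume_preserving_piFinSuccAbove (fun _ : Fin (m + 1) => ℝ) 0
    have hTS : {x : Fin (m + 1) → ℝ | MvPolynomial.eval x p = 0}
        = MeasurableEquiv.piFinSuccAbove (fun _ : Fin (m + 1) => ℝ) 0 ⁻¹' S' := by
      ext x
      simp only [Set.mem_setOf_eq, Set.mem_preimage, MeasurableEquiv.piFinSuccAbove,
        MeasurableEquiv.coe_mk, Fin.insertNthEquiv, Equiv.coe_fn_symm_mk, hS'def, Fin.removeNth,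
        Fin.zero_succAbove]
      rw [key, Fin.removeNth_zero]
      rfl
    rw [hTS, hT.measure_preimage hS'm.nullMeasurableSet]
    have hswap : ((volume : Measure ℝ).prod (volume : Measure (Fin m → ℝ))) S'
        = ((volume : Measure (Fin m → ℝ)).prod (volume : Measure ℝ)) (Prod.swap ⁻¹' S') := by
      rw [← Measure.prod_swap, Measure.map_apply measurable_swap hS'm]
    rw [show (volume : Measure (ℝ × (Fin m → ℝ))) = (volume : Measure ℝ).prod volume from rfl,
      hswap, Measure.measure_prod_null (measurable_swap hS'm)]
    have h0 : ∀ᵐ s : Fin m → ℝ, MvPolynomial.eval s (q.coeff i0) ≠ 0 := by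
      rw [ae_iff]
      simpa using ih (q.coeff i0) hi0
    filter_upwards [h0] with s hs
    have hne : q.map (MvPolynomial.eval s) ≠ 0 := fun h => by
      have := Polynomial.ext_iff.mp h i0
      rw [Polynomial.coeff_map] at this
      simp only [Polynomial.coeff_zero] at this
      exact hs this
    have : (Prod.mk s ⁻¹' (Prod.swap ⁻¹' S'))
        = {y : ℝ | Polynomial.eval y (q.map (MvPolynomial.eval s)) = 0} := rfl
    rw [this]
    exact (Polynomial.finite_setOf_isRoot hne).measure_zero _

lemma mvpoly_zero_set_null' {σ : Type*} [Fintype σ] (p : MvPolynomial σ ℝ) (hp : p ≠ 0) :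
    volume {x : σ → ℝ | MvPolynomial.eval x p = 0} = 0 := by
  classical
  set e := Fintype.equivFin σ with he
  set T := MeasurableEquiv.piCongrLeft (fun _ : σ => ℝ) e.symm with hT
  have hTm : MeasurePreserving T volume volume :=
    volume_measurePreserving_piCongrLeft (fun _ : σ => ℝ) e.symm
  have hTapp : ∀ (x : Fin (Fintype.card σ) → ℝ) (s : σ), T x s = x (e s) := by
    intro x s
    have := MeasurableEquiv.piCongrLeft_apply_apply (β := fun _ : σ => ℝ) e.symm x (e s)
    simpa using this
  have hA : MeasurableSet {x : σ → ℝ | MvPolynomial.eval x p = 0} :=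
    (isClosed_eq (continuous_mvpoly_eval p) continuous_const).measurableSet
  have hpre : T ⁻¹' {x : σ → ℝ | MvPolynomial.eval x p = 0}
      = {x : Fin (Fintype.card σ) → ℝ | MvPolynomial.eval x (MvPolynomial.rename e p) = 0} := by
    ext x
    simp only [Set.mem_preimage, Set.mem_setOf_eq, MvPolynomial.eval_rename]
    have : T x = fun s => x (e s) := funext (hTapp x)
    rw [this]
    rfl
  have hmp := hTm.measure_preimage hA.nullMeasurableSet
  rw [hpre] at hmp
  rw [← hmp]
  exact mvpoly_zero_set_null _ _ fun h => hp (by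
    have hinj := MvPolynomial.rename_injective (R := ℝ) e e.injective
    exact hinj (by rw [h, MvPolynomial.rename]; simp))

noncomputable def pdet (k n : ℕ) : MvPolynomial (Fin k × Fin n) ℝ :=
  (((Matrix.of fun i j => MvPolynomial.X (i, j)) :
      Matrix (Fin k) (Fin n) (MvPolynomial (Fin k × Fin n) ℝ))
    * ((Matrix.of fun i j => MvPolynomial.X (i, j)) :
      Matrix (Fin k) (Fin n) (MvPolynomial (Fin k × Fin n) ℝ))ᵀ).det

lemma eval_pdet {k n : ℕ} (x : Fin k × Fin n → ℝ) :
    MvPolynomial.eval x (pdet k n)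
      = (((Matrix.of fun i j => x (i, j)) : Matrix (Fin k) (Fin n) ℝ)
        * ((Matrix.of fun i j => x (i, j)) : Matrix (Fin k) (Fin n) ℝ)ᵀ).det := by
  rw [pdet, RingHom.map_det]
  congr 1
  rw [RingHom.mapMatrix_apply, Matrix.map_mul, Matrix.transpose_map]
  congr 1 <;> (ext i j; simp)

lemma pdet_ne_zero {k n : ℕ} (hkn : k ≤ n) : pdet k n ≠ 0 := by
  set x0 : Fin k × Fin n → ℝ := fun s => if s.2 = Fin.castLE hkn s.1 then 1 else 0 with hx0
  have key : (((Matrix.of fun i j => x0 (i, j)) : Matrix (Fin k) (Fin n) ℝ)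
      * ((Matrix.of fun i j => x0 (i, j)) : Matrix (Fin k) (Fin n) ℝ)ᵀ) = 1 := by
    ext i i'
    simp only [Matrix.mul_apply, Matrix.transpose_apply, Matrix.of_apply, hx0]
    rw [Finset.sum_eq_single (Fin.castLE hkn i)]
    · by_cases h : i = i' <;> simp [Matrix.one_apply, h, Fin.castLE_inj]
    · intro j _ hj
      simp [hj]
    · simp
  intro h
  have heval := eval_pdet x0
  rw [h, map_zero, key, Matrix.det_one] at heval
  exact zero_ne_one heval

end AuxPoly

/-- The submodule of symmetric `k×k` real matrices. -/
def symMat (k : ℕ) : Submodule ℝ (Matrix (Fin k) (Fin k) ℝ) where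
  carrier := {M | M.IsSymm}
  add_mem' := fun ha hb => ha.add hb
  zero_mem' := Matrix.isSymm_zero
  smul_mem' := fun c _ h => h.smul c

/-- The ambient finite-dimensional real vector space of pairs `(W, M)` with `W` a real
`k×n` matrix and `M` a real symmetric `k×k` matrix. -/
abbrev MatPairSpace (k n : ℕ) := Matrix (Fin k) (Fin n) ℝ × (symMat k)

noncomputable local instance (k n : ℕ) : MeasurableSpace (MatPairSpace k n) := borel _
local instance (k n : ℕ) : BorelSpace (MatPairSpace k n) := ⟨rfl⟩

/-- The set `N` — pairs `(W, M)` with `M` symmetric positive definite admitting a nonzero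
vector `v` and `λ > 0` such that `Wᵀv = 0` and `Mv = λv` — has Lebesgue (additive Haar)
measure zero in the space of pairs `(W, M)` with `M` symmetric. -/
theorem excSet_measure_zero {k n : ℕ} (hk : 0 < k) (hkn : k < n)
    (μ : Measure (MatPairSpace k n)) [μ.IsAddHaarMeasure] :
    μ {p : MatPairSpace k n |
        (p.2 : Matrix (Fin k) (Fin k) ℝ).PosDef ∧
        ∃ v : Fin k → ℝ, v ≠ 0 ∧ ∃ lam : ℝ, 0 < lam ∧
          (p.1)ᵀ.mulVec v = 0 ∧
          (p.2 : Matrix (Fin k) (Fin k) ℝ).mulVec v = lam • v} = 0 := by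
  classical
  set Z : Set (Fin k × Fin n → ℝ) := {x | MvPolynomial.eval x (pdet k n) = 0} with hZdef
  have hZvol : (volume : Measure (Fin k × Fin n → ℝ)) Z = 0 :=
    mvpoly_zero_set_null' _ (pdet_ne_zero hkn.le)
  have hZm : MeasurableSet Z :=
    (isClosed_eq (continuous_mvpoly_eval _) continuous_const).measurableSet
  let e₁ : Matrix (Fin k) (Fin n) ℝ ≃ₗ[ℝ] (Fin k × Fin n → ℝ) :=
    { toFun := fun W s => W s.1 s.2
      invFun := fun x => Matrix.of fun i j => x (i, j)
      map_add' := fun a b => rfl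
      map_smul' := fun c a => rfl
      left_inv := fun W => rfl
      right_inv := fun x => rfl }
  let E₁ : Matrix (Fin k) (Fin n) ℝ ≃L[ℝ] (Fin k × Fin n → ℝ) := e₁.toContinuousLinearEquiv
  let E₂ : (symMat k) ≃L[ℝ] (Fin (Module.finrank ℝ (symMat k)) → ℝ) :=
    ((Module.finBasis ℝ (symMat k)).equivFun).toContinuousLinearEquiv
  let E := E₁.prodCongr E₂
  let ν : Measure ((Fin k × Fin n → ℝ) × (Fin (Module.finrank ℝ (symMat k)) → ℝ)) :=
    (volume : Measure (Fin k × Fin n → ℝ)).prod volume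
  have hν : ν.IsAddHaarMeasure := Measure.prod.instIsAddHaarMeasure _ _
  let μ' : Measure (MatPairSpace k n) := ν.map E.symm
  have hμ' : μ'.IsAddHaarMeasure := by infer_instance
  set B : Set (MatPairSpace k n) := {p | E₁ p.1 ∈ Z} with hBdef
  have hBm : MeasurableSet B := by
    have hc : Continuous fun p : MatPairSpace k n => E₁ p.1 :=
      E₁.continuous.comp continuous_fst
    exact hc.measurable hZm
  have hμ'B : μ' B = 0 := by
    show (ν.map E.symm) B = 0
    rw [Measure.map_apply E.symm.continuous.measurable hBm]
    have hpre : ⇑E.symm ⁻¹' B = Z ×ˢ Set.univ := by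
      ext y
      simp only [Set.mem_preimage, hBdef, Set.mem_setOf_eq, Set.mem_prod, Set.mem_univ, and_true]
      have h1 : (E.symm y).1 = E₁.symm y.1 := rfl
      rw [h1, E₁.apply_symm_apply]
    rw [hpre, Measure.prod_prod, hZvol, zero_mul]
  have hμB : μ B = 0 := by
    have : LocallyCompactSpace (Matrix (Fin k) (Fin n) ℝ) :=
      inferInstanceAs (LocallyCompactSpace (Fin k → Fin n → ℝ))
    have : LocallyCompactSpace (Matrix (Fin k) (Fin k) ℝ) :=
      inferInstanceAs (LocallyCompactSpace (Fin k → Fin k → ℝ))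
    have : LocallyCompactSpace (symMat k) :=
      ((symMat k).closed_of_finiteDimensional).isClosedEmbedding_subtypeVal.locallyCompactSpace
    have : SecondCountableTopology (Matrix (Fin k) (Fin n) ℝ) :=
      inferInstanceAs (SecondCountableTopology (Fin k → Fin n → ℝ))
    have : SecondCountableTopology (Matrix (Fin k) (Fin k) ℝ) :=
      inferInstanceAs (SecondCountableTopology (Fin k → Fin k → ℝ))
    have : SecondCountableTopology (symMat k) := TopologicalSpace.Subtype.secondCountableTopology _
    rw [Measure.isAddLeftInvariant_eq_smul μ μ']
    simp [hμ'B]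
  refine measure_mono_null ?_ hμB
  intro p hp
  obtain ⟨-, v, hv, lam, hlam, hWv, -⟩ := hp
  show E₁ p.1 ∈ Z
  have hE₁ : ((Matrix.of fun i j => (E₁ p.1) (i, j)) : Matrix (Fin k) (Fin n) ℝ) = p.1 := rfl
  rw [hZdef, Set.mem_setOf_eq, eval_pdet, hE₁]
  refine Matrix.exists_mulVec_eq_zero_iff.mp ⟨v, hv, ?_⟩
  rw [← Matrix.mulVec_mulVec, hWv, Matrix.mulVec_zero]
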